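/- (Proposition 1.) Let R ≥ 1, let 0 ≤ δ ≤ R(R−1)/2 (so that the set of permutations of Fin R with inversion number exactly δ is nonempty), and let 1 ≤ M ≤ R. If σ is drawn uniformly at random from the set of permutations of Fin R with inversion number exactly δ, then the probability that σ⁻¹(0) < M (i.e., the top-ranked item appears among the first M positions of σ) equals ∑_{m=1}^{M} N(R−1, δ−m+1) / N(R,δ); equivalently, the number of permutations of Fin R with inversion number exactly δ satisfying σ⁻¹(0) < M equals ∑_{m=1}^{M} N(R−1, δ−m+1). -/

import Mathlib

/-- The inversion number of a permutation `σ` of `Fin n`: the number of pairs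
`(i, j)` with `i < j` and `σ i > σ j`. -/
def invNum (n : ℕ) (σ : Equiv.Perm (Fin n)) : ℕ :=
  (Finset.univ.filter (fun p : Fin n × Fin n => p.1 < p.2 ∧ σ p.2 < σ p.1)).card

/-- `Nperm r d` is the number of permutations of `Fin r` with inversion number exactly `d`. -/
def Nperm (r d : ℕ) : ℕ :=
  (Finset.univ.filter (fun σ : Equiv.Perm (Fin r) => invNum r σ = d)).card

open Finset Equiv

/-- Insert the value `0` at position `k`. -/
def PhiAux (n : ℕ) (k : Fin (n+1)) (τ : Equiv.Perm (Fin n)) : Equiv.Perm (Fin (n+1)) :=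
  (finSuccEquiv' k).trans (τ.optionCongr.trans (finSuccEquiv' 0).symm)

/-- Delete the value `0` (at position `k`). -/
def PsiAux (n : ℕ) (k : Fin (n+1)) (σ : Equiv.Perm (Fin (n+1))) : Equiv.Perm (Fin n) :=
  Equiv.removeNone ((finSuccEquiv' k).symm.trans (σ.trans (finSuccEquiv' 0)))

lemma PhiAux_at (n : ℕ) (k : Fin (n+1)) (τ : Equiv.Perm (Fin n)) :
    PhiAux n k τ k = 0 := by
  simp [PhiAux, finSuccEquiv'_at, finSuccEquiv'_symm_none]

lemma PhiAux_succAbove (n : ℕ) (k : Fin (n+1)) (τ : Equiv.Perm (Fin n)) (i : Fin n) :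
    PhiAux n k τ (k.succAbove i) = (τ i).succ := by
  simp [PhiAux, finSuccEquiv'_succAbove, finSuccEquiv'_symm_some, Fin.zero_succAbove]

lemma optionCongr_removeNone' {α β : Type*} (e : Option α ≃ Option β) (h : e none = none) :
    (Equiv.removeNone e).optionCongr = e := by
  apply Equiv.ext; intro x
  cases x with
  | none => simp [h]
  | some a =>
    have hx : ∃ b, e (some a) = some b := by
      cases hx : e (some a) with
      | none => exact absurd (e.injective (hx.trans h.symm)) (by simp)
      | some b => exact ⟨b, rfl⟩
    rw [Equiv.optionCongr_apply, Option.map_some]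
    exact Equiv.removeNone_some e hx

lemma PsiAux_PhiAux (n : ℕ) (k : Fin (n+1)) (τ : Equiv.Perm (Fin n)) :
    PsiAux n k (PhiAux n k τ) = τ := by
  have : (finSuccEquiv' k).symm.trans ((PhiAux n k τ).trans (finSuccEquiv' (0 : Fin (n+1))))
      = τ.optionCongr := by
    ext x
    simp [PhiAux]
  rw [PsiAux, this, Equiv.removeNone_optionCongr]

lemma PhiAux_PsiAux (n : ℕ) (k : Fin (n+1)) (σ : Equiv.Perm (Fin (n+1))) (hσ : σ k = 0) :
    PhiAux n k (PsiAux n k σ) = σ := by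
  have he : ((finSuccEquiv' k).symm.trans (σ.trans (finSuccEquiv' (0 : Fin (n+1))))) none
      = none := by
    simp [finSuccEquiv'_symm_none, hσ, finSuccEquiv'_at]
  rw [PhiAux, PsiAux, optionCongr_removeNone' _ he]
  ext x
  simp

lemma invNum_PhiAux (n : ℕ) (k : Fin (n+1)) (τ : Equiv.Perm (Fin n)) :
    invNum (n+1) (PhiAux n k τ) = invNum n τ + (k : ℕ) := by
  classical
  set σ := PhiAux n k τ with hσdef
  have key : (Finset.univ.filter
        (fun p : Fin (n+1) × Fin (n+1) => p.1 < p.2 ∧ σ p.2 < σ p.1))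
      = ((Finset.univ.filter (fun p : Fin n × Fin n => p.1 < p.2 ∧ τ p.2 < τ p.1)).image
          (fun p => (k.succAbove p.1, k.succAbove p.2))) ∪
        ((Finset.Iio k).image (fun i => (i, k))) := by
    ext p
    simp only [mem_filter, mem_univ, true_and, mem_union, mem_image, mem_Iio, Prod.ext_iff]
    constructor
    · rintro ⟨hlt, hinv⟩
      by_cases h2 : p.2 = k
      · right
        exact ⟨p.1, h2 ▸ hlt, rfl, h2.symm⟩
      · left
        have h1 : p.1 ≠ k := by
          rintro rfl
          rw [PhiAux_at] at hinv
          exact absurd hinv (Fin.not_lt_zero _)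
        obtain ⟨i, hi⟩ := Fin.exists_succAbove_eq h1
        obtain ⟨j, hj⟩ := Fin.exists_succAbove_eq h2
        refine ⟨(i, j), ⟨?_, ?_⟩, hi, hj⟩
        · rw [← hi, ← hj] at hlt
          exact (Fin.succAbove_lt_succAbove_iff).mp hlt
        · rw [← hi, ← hj, PhiAux_succAbove, PhiAux_succAbove] at hinv
          exact (Fin.succ_lt_succ_iff).mp hinv
    · rintro (⟨⟨i, j⟩, ⟨hij, hτ⟩, hi, hj⟩ | ⟨i, hik, hi, hk⟩)
      · constructor
        · rw [← hi, ← hj]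
          exact (Fin.succAbove_lt_succAbove_iff).mpr hij
        · rw [← hi, ← hj, PhiAux_succAbove, PhiAux_succAbove]
          exact (Fin.succ_lt_succ_iff).mpr hτ
      · refine ⟨?_, ?_⟩
        · rw [← hi, ← hk]; exact hik
        · rw [← hk, PhiAux_at]
          have h1 : p.1 ≠ k := by rw [← hi]; exact ne_of_lt hik
          obtain ⟨j, hj⟩ := Fin.exists_succAbove_eq h1
          rw [← hj, PhiAux_succAbove]
          exact Fin.succ_pos _
  have hdisj : Disjoint
      ((Finset.univ.filter (fun p : Fin n × Fin n => p.1 < p.2 ∧ τ p.2 < τ p.1)).image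
          (fun p => (k.succAbove p.1, k.succAbove p.2)))
      ((Finset.Iio k).image (fun i => (i, k))) := by
    rw [Finset.disjoint_left]
    rintro p hp hq
    simp only [mem_image, mem_Iio, Prod.ext_iff] at hp hq
    obtain ⟨⟨i, j⟩, _, _, hj⟩ := hp
    obtain ⟨a, _, _, hk⟩ := hq
    exact Fin.succAbove_ne k j (hj.trans hk.symm)
  have hinj1 : Function.Injective
      (fun p : Fin n × Fin n => (k.succAbove p.1, k.succAbove p.2)) := by
    rintro ⟨a, b⟩ ⟨c, d⟩ h
    simp only [Prod.ext_iff] at h ⊢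
    exact ⟨Fin.succAbove_right_injective h.1, Fin.succAbove_right_injective h.2⟩
  have hinj2 : Function.Injective (fun i : Fin (n+1) => (i, k)) := by
    intro a b h
    simpa using h
  rw [invNum, key, Finset.card_union_of_disjoint hdisj,
    Finset.card_image_of_injective _ hinj1, Finset.card_image_of_injective _ hinj2,
    Fin.card_Iio]
  rfl

lemma count_fiber (n d : ℕ) (k : Fin (n+1)) :
    (Finset.univ.filter
        (fun σ : Equiv.Perm (Fin (n+1)) => invNum (n+1) σ = d ∧ σ k = 0)).card
      = if (k : ℕ) ≤ d then Nperm n (d - (k : ℕ)) else 0 := by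
  classical
  split_ifs with h
  · rw [Nperm]
    symm
    apply Finset.card_bij' (i := fun τ _ => PhiAux n k τ) (j := fun σ _ => PsiAux n k σ)
    · intro τ hτ
      simp only [mem_filter, mem_univ, true_and] at hτ ⊢
      refine ⟨?_, PhiAux_at n k τ⟩
      rw [invNum_PhiAux, hτ, Nat.sub_add_cancel h]
    · intro σ hσ
      simp only [mem_filter, mem_univ, true_and] at hσ ⊢
      have hrec := PhiAux_PsiAux n k σ hσ.2
      have := invNum_PhiAux n k (PsiAux n k σ)
      rw [hrec, hσ.1] at this
      omega
    · intro τ _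
      exact PsiAux_PhiAux n k τ
    · intro σ hσ
      simp only [mem_filter, mem_univ, true_and] at hσ
      exact PhiAux_PsiAux n k σ hσ.2
  · rw [Finset.card_eq_zero, Finset.filter_eq_empty_iff]
    rintro σ _ ⟨hinv, h0⟩
    have hrec := PhiAux_PsiAux n k σ h0
    have := invNum_PhiAux n k (PsiAux n k σ)
    rw [hrec, hinv] at this
    omega

/-- (Proposition 1.)  For `R ≥ 1`, `0 ≤ δ ≤ R(R−1)/2` and `1 ≤ M ≤ R`: if `σ` is drawn
uniformly at random from the permutations of `Fin R` with inversion number exactly `δ`,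
the probability that `σ⁻¹ 0 < M` equals `∑_{m=1}^{M} N(R−1, δ−m+1) / N(R,δ)`
(summands with negative index `δ−m+1 < 0` being zero); equivalently, the number of
permutations of `Fin R` with inversion number exactly `δ` and `σ⁻¹ 0 < M` equals
`∑_{m=1}^{M} N(R−1, δ−m+1)`. -/
theorem stmt2 (R δ M : ℕ) (hR : 1 ≤ R) (hδ : δ ≤ R * (R - 1) / 2)
    (hM1 : 1 ≤ M) (hMR : M ≤ R) :
    ((Finset.univ.filter (fun σ : Equiv.Perm (Fin R) =>
        invNum R σ = δ ∧ ((σ⁻¹ ⟨0, hR⟩ : Fin R) : ℕ) < M)).card : ℝ) / (Nperm R δ : ℝ) =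
      (∑ m ∈ Finset.Icc 1 M,
        if m ≤ δ + 1 then (Nperm (R - 1) (δ + 1 - m) : ℝ) else 0) / (Nperm R δ : ℝ) ∧
    (Finset.univ.filter (fun σ : Equiv.Perm (Fin R) =>
        invNum R σ = δ ∧ ((σ⁻¹ ⟨0, hR⟩ : Fin R) : ℕ) < M)).card =
      ∑ m ∈ Finset.Icc 1 M, if m ≤ δ + 1 then Nperm (R - 1) (δ + 1 - m) else 0 := by
  classical
  obtain ⟨n, rfl⟩ : ∃ n, R = n + 1 := ⟨R - 1, (Nat.succ_pred_eq_of_pos hR).symm⟩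
  have hzero : (⟨0, hR⟩ : Fin (n+1)) = 0 := rfl
  have key : (Finset.univ.filter (fun σ : Equiv.Perm (Fin (n+1)) =>
        invNum (n+1) σ = δ ∧ ((σ⁻¹ ⟨0, hR⟩ : Fin (n+1)) : ℕ) < M)).card =
      ∑ m ∈ Finset.Icc 1 M, if m ≤ δ + 1 then Nperm ((n+1) - 1) (δ + 1 - m) else 0 := by
    rw [Finset.card_eq_sum_card_fiberwise
      (f := fun σ : Equiv.Perm (Fin (n+1)) => σ⁻¹ ⟨0, hR⟩)
      (t := Finset.univ.filter (fun k : Fin (n+1) => (k : ℕ) < M))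
      (fun σ hσ => by
        simp only [mem_filter, mem_univ, true_and] at hσ ⊢
        exact Finset.mem_filter.mpr ⟨Finset.mem_univ _, (Finset.mem_filter.mp hσ).2.2⟩)]
    have fib : ∀ k ∈ Finset.univ.filter (fun k : Fin (n+1) => (k : ℕ) < M),
        ((Finset.univ.filter (fun σ : Equiv.Perm (Fin (n+1)) =>
          invNum (n+1) σ = δ ∧ ((σ⁻¹ ⟨0, hR⟩ : Fin (n+1)) : ℕ) < M)).filter
            (fun σ => σ⁻¹ ⟨0, hR⟩ = k)).card
        = if (k : ℕ) ≤ δ then Nperm n (δ - (k : ℕ)) else 0 := by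
      intro k hk
      simp only [mem_filter, mem_univ, true_and] at hk
      rw [← count_fiber n δ k]
      congr 1
      ext σ
      simp only [Finset.mem_filter, Finset.mem_univ, true_and]
      constructor
      · rintro ⟨⟨h1, _⟩, h3⟩
        refine ⟨h1, ?_⟩
        rw [Equiv.Perm.inv_eq_iff_eq] at h3
        rw [← h3, hzero]
      · rintro ⟨h1, h2⟩
        have h3 : σ⁻¹ ⟨0, hR⟩ = k := by
          rw [Equiv.Perm.inv_eq_iff_eq, h2, hzero]
        exact ⟨⟨h1, h3 ▸ hk⟩, h3⟩
    rw [Finset.sum_congr rfl fib]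
    have lhs : ∑ k ∈ Finset.univ.filter (fun k : Fin (n+1) => (k : ℕ) < M),
        (if (k : ℕ) ≤ δ then Nperm n (δ - (k : ℕ)) else 0)
        = ∑ j ∈ Finset.range M, (if j ≤ δ then Nperm n (δ - j) else 0) := by
      rw [Finset.sum_filter, Fin.sum_univ_eq_sum_range
        (fun j => if j < M then (if j ≤ δ then Nperm n (δ - j) else 0) else 0),
        ← Finset.sum_filter]
      congr 1
      ext j
      simp only [Finset.mem_filter, Finset.mem_range]
      omega
    rw [lhs]
    rw [show Finset.Icc 1 M = Finset.image (fun j => j + 1) (Finset.range M) by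
      ext m
      simp only [Finset.mem_Icc, Finset.mem_image, Finset.mem_range]
      constructor
      · rintro ⟨h1, h2⟩; exact ⟨m - 1, by omega, by omega⟩
      · rintro ⟨j, hj, rfl⟩; omega]
    rw [Finset.sum_image (by intro a _ b _ h; simp only at h; omega)]
    apply Finset.sum_congr rfl
    intro j _
    have h1 : j + 1 ≤ δ + 1 ↔ j ≤ δ := by omega
    have h2 : δ + 1 - (j + 1) = δ - j := by omega
    simp only [h1, h2, Nat.add_sub_cancel]
  refine ⟨?_, key⟩
  rw [key]
  congr 1
  push_cast
  rfl
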